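/- For every n ≥ 1, the string M_n defined by the recursive construction contains every permutation of {1,...,n} as a contiguous substring. -/

import Mathlib

/-- All length-`n` windows of `s`. -/
def windows (n : ℕ) (s : List ℕ) : List (List ℕ) :=
  (List.range (s.length + 1 - n)).map fun i => (s.drop i).take n

/-- The permutations of `{1,…,n}` in order of first appearance as substrings of `s`. -/
def permsOrder (n : ℕ) (s : List ℕ) : List (List ℕ) :=
  (((windows n s).filter fun w => decide (w.Perm (List.range' 1 n))).reverse.dedup).reverse

/-- Length of the maximal overlap: the longest suffix of `s` that is a prefix of `t`. -/
def ov (s t : List ℕ) : ℕ :=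
  ((List.range (min s.length t.length + 1)).filter fun l => (t.take l).isSuffixOf s).foldr max 0

/-- Concatenate with maximal overlap. -/
def mergeOv (s t : List ℕ) : List ℕ := s ++ t.drop (ov s t)

/-- The recursively constructed superpermutation `M_n`. -/
def Mrec : ℕ → List ℕ
  | 0 => []
  | 1 => [1]
  | n + 2 =>
      ((permsOrder (n + 1) (Mrec (n + 1))).map fun P => P ++ [n + 2] ++ P).foldl mergeOv []
lemma ov_suffix (s t : List ℕ) : t.take (ov s t) <:+ s := by
  unfold ov
  set L := (List.range (min s.length t.length + 1)).filter
      (fun l => (t.take l).isSuffixOf s) with hL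
  have : L.foldr max 0 ∈ 0 :: L := by
    clear hL; induction L with
    | nil => simp
    | cons a L ih =>
      simp only [List.foldr_cons]
      rcases max_choice a (L.foldr max 0) with h | h <;> rw [h]
      · simp
      · rcases List.mem_cons.1 ih with h' | h' <;> simp_all
  rcases List.mem_cons.1 this with h | h
  · rw [h]; simp
  · rw [hL] at h
    have := (List.mem_filter.1 h).2
    simpa [List.isSuffixOf_iff_suffix] using this

lemma suffix_mergeOv (s t : List ℕ) : t <:+ mergeOv s t := by
  obtain ⟨u, hu⟩ := ov_suffix s t
  refine ⟨u, ?_⟩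
  rw [mergeOv]
  set k := ov s t with hk
  rw [← hu, List.append_assoc, List.take_append_drop]

lemma infix_mergeOv_left {u : List ℕ} (s t : List ℕ) (h : u <:+: s) :
    u <:+: mergeOv s t :=
  h.trans ((s.prefix_append (t.drop (ov s t))).isInfix)

lemma infix_foldl {u : List ℕ} (L : List (List ℕ)) (init : List ℕ)
    (h : u <:+: init) : u <:+: L.foldl mergeOv init := by
  induction L generalizing init with
  | nil => exact h
  | cons a L ih => exact ih _ (infix_mergeOv_left _ _ h)

lemma mem_infix_foldl {q : List ℕ} (L : List (List ℕ)) (init : List ℕ)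
    (h : q ∈ L) : q <:+: L.foldl mergeOv init := by
  induction L generalizing init with
  | nil => simp at h
  | cons a L ih =>
    rcases List.mem_cons.1 h with rfl | h
    · exact infix_foldl L (mergeOv init q) (suffix_mergeOv init q).isInfix
    · exact ih _ h

lemma mem_windows {w s : List ℕ} {n : ℕ} (hl : w.length = n) (h : w <:+: s) :
    w ∈ windows n s := by
  obtain ⟨a, b, rfl⟩ := h
  refine List.mem_map.2 ⟨a.length, List.mem_range.2 ?_, ?_⟩
  · simp [hl]; omega
  · rw [List.append_assoc, List.drop_left, List.take_left' hl]

lemma mem_permsOrder {w s : List ℕ} {n : ℕ} (hw : w.Perm (List.range' 1 n))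
    (h : w <:+: s) : w ∈ permsOrder n s := by
  have hl : w.length = n := by simpa using hw.length_eq
  unfold permsOrder
  simp only [List.mem_reverse, List.mem_dedup, List.mem_filter, decide_eq_true_eq]
  exact ⟨mem_windows hl h, hw⟩

theorem stmt6 (n : ℕ) (hn : 1 ≤ n) (w : List ℕ) (hw : w.Perm (List.range' 1 n)) :
    w <:+: Mrec n := by
  induction n using Nat.strong_induction_on generalizing w with
  | _ n ih =>
    match n, hn, ih with
    | 1, _, _ =>
      have : w = [1] := by simpa using (List.perm_singleton.1 (by simpa using hw))
      simp [this, Mrec]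
    | (n + 2), _, ih =>
      have hmem : n + 2 ∈ w := hw.mem_iff.2 (by simp [List.mem_range'_1])
      obtain ⟨A, B, rfl⟩ := List.append_of_mem hmem
      have hr : List.range' 1 (n + 2) = List.range' 1 (n + 1) ++ [n + 2] := by
        have h : List.range' 1 (n + 2) = List.range' 1 (n + 1) ++ [1 + 1 * (n + 1)] :=
          List.range'_concat
        rw [show 1 + 1 * (n + 1) = n + 2 by ring] at h
        exact h
      have hAB : (A ++ B).Perm (List.range' 1 (n + 1)) := by
        have h1 : (A ++ (n + 2) :: B).Perm (List.range' 1 (n + 1) ++ [n + 2]) :=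
          hw.trans (by rw [hr])
        have h2 : ((n + 2) :: (A ++ B)).Perm ((n + 2) :: List.range' 1 (n + 1)) := by
          refine List.perm_middle.symm.trans ?_
          simpa using h1.trans List.perm_append_comm
        exact h2.cons_inv
      have hP : (B ++ A).Perm (List.range' 1 (n + 1)) :=
        List.perm_append_comm.trans hAB
      have hPM : (B ++ A) <:+: Mrec (n + 1) := ih (n + 1) (by omega) (by omega) _ hP
      have hPo : (B ++ A) ∈ permsOrder (n + 1) (Mrec (n + 1)) := mem_permsOrder hP hPM
      have hQ : ((B ++ A) ++ [n + 2] ++ (B ++ A)) <:+: Mrec (n + 2) := by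
        rw [show Mrec (n + 2) = ((permsOrder (n + 1) (Mrec (n + 1))).map
          fun P => P ++ [n + 2] ++ P).foldl mergeOv [] from rfl]
        exact mem_infix_foldl _ _ (List.mem_map.2 ⟨_, hPo, rfl⟩)
      refine List.IsInfix.trans ?_ hQ
      exact ⟨B, A, by simp⟩
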